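/- Let γ be a positive real-valued random variable with E[|ln γ|] < ∞. Then E[log₂(1 + γ)] ≥ log₂(1 + exp(E[ln γ])). -/
import Mathlib


open MeasureTheory

/-- Supporting line of the convex function `y ↦ log (1 + exp y)` at `m`. -/
lemma tangent_line_le (m y : ℝ) :
    Real.log (1 + Real.exp m) + Real.exp m / (1 + Real.exp m) * (y - m) ≤
      Real.log (1 + Real.exp y) := by
  set c : ℝ := Real.exp m / (1 + Real.exp m) with hc
  have hm : (0:ℝ) < 1 + Real.exp m := by positivity
  have hc0 : 0 ≤ c := by positivity
  have hc1 : c ≤ 1 := by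
    rw [hc, div_le_one hm]; linarith
  have hconv := convexOn_exp.2 (Set.mem_univ 0) (Set.mem_univ (y - m))
      (by linarith : (0:ℝ) ≤ 1 - c) hc0 (by ring)
  simp only [smul_eq_mul, mul_zero, zero_add, Real.exp_zero, mul_one] at hconv
  -- (1 + e^m) * exp (c*(y-m)) ≤ 1 + e^y
  have key : (1 + Real.exp m) * Real.exp (c * (y - m)) ≤ 1 + Real.exp y := by
    have h2 : (1 + Real.exp m) * Real.exp (c * (y - m)) ≤
        (1 + Real.exp m) * ((1 - c) + c * Real.exp (y - m)) := by
      apply mul_le_mul_of_nonneg_left hconv (le_of_lt hm)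
    have h3 : (1 + Real.exp m) * ((1 - c) + c * Real.exp (y - m)) = 1 + Real.exp y := by
      have : (1 + Real.exp m) * c = Real.exp m := by
        rw [hc]; field_simp
      have hexp : Real.exp m * Real.exp (y - m) = Real.exp y := by
        rw [← Real.exp_add]; ring_nf
      calc (1 + Real.exp m) * ((1 - c) + c * Real.exp (y - m))
          = (1 + Real.exp m) - (1 + Real.exp m) * c
            + (1 + Real.exp m) * c * Real.exp (y - m) := by ring
        _ = 1 + Real.exp y := by rw [this, hexp]; ring
    linarith
  have hlog := Real.log_le_log (by positivity) key
  rwa [Real.log_mul (ne_of_gt hm) (Real.exp_ne_zero _), Real.log_exp] at hlog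

/-- Jensen lower bound: `E[log₂(1+γ)] ≥ log₂(1 + exp(E[ln γ]))`. -/
theorem log2_one_add_exp_integral_log_le
    {Ω : Type*} [MeasureSpace Ω] [IsProbabilityMeasure (volume : Measure Ω)]
    (γ : Ω → ℝ) (hmeas : Measurable γ)
    (hpos : ∀ᵐ ω, 0 < γ ω)
    (hlog : Integrable (fun ω => Real.log (γ ω)))
    (hint : Integrable (fun ω => Real.log (1 + γ ω))) :
    Real.log (1 + Real.exp (∫ ω, Real.log (γ ω))) / Real.log 2 ≤
      ∫ ω, Real.log (1 + γ ω) / Real.log 2 := by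
  set m : ℝ := ∫ ω, Real.log (γ ω) with hm
  set c : ℝ := Real.exp m / (1 + Real.exp m) with hc
  have hmono : Real.log (1 + Real.exp m) ≤ ∫ ω, Real.log (1 + γ ω) := by
    have hg : Integrable (fun ω => Real.log (1 + Real.exp m) + c * (Real.log (γ ω) - m)) := by
      have h1 : Integrable (fun ω => Real.log (γ ω) - m) := by
        exact hlog.sub (integrable_const m)
      exact (integrable_const _).add (h1.const_mul c)
    have hle : ∀ᵐ ω, (fun ω => Real.log (1 + Real.exp m) + c * (Real.log (γ ω) - m)) ω ≤
        Real.log (1 + γ ω) := by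
      filter_upwards [hpos] with ω hω
      have := tangent_line_le m (Real.log (γ ω))
      rwa [Real.exp_log hω] at this
    have := integral_mono_ae hg hint hle
    have hi : (∫ ω, (Real.log (1 + Real.exp m) + c * (Real.log (γ ω) - m))) =
        Real.log (1 + Real.exp m) := by
      have h1 : Integrable (fun ω => Real.log (γ ω) - m) := by
        exact hlog.sub (integrable_const m)
      rw [integral_add (integrable_const _) (h1.const_mul c),
        MeasureTheory.integral_const_mul, integral_sub hlog (integrable_const m), integral_const]
      simp [← hm]
    rwa [hi] at this
  have h2 : (0:ℝ) < Real.log 2 := Real.log_pos (by norm_num)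
  calc Real.log (1 + Real.exp m) / Real.log 2
      ≤ (∫ ω, Real.log (1 + γ ω)) / Real.log 2 := by gcongr
    _ = ∫ ω, Real.log (1 + γ ω) / Real.log 2 := (integral_div _ _).symm
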